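/- The one-form α on S = G ⋉ V defined by α(g,v)(ξ_g,(v,u)) = ⟨c(g), u⟩ has exterior derivative dα that is invariant under right translations by S, and its value at the identity is dα(e,0)((ξ,u),(η,w)) = ⟨dc(ξ), w⟩ − ⟨dc(η), u⟩, where dc := T_e c: g → V*. -/

import Mathlib

/-- On the semidirect product `S = G ⋉ V` (here with `G` an additive Lie group
modeled on a normed space, `ρ` a right representation of `G` on `V`, and
`c : G → V*` a one-cocycle for the contragredient action,
`c (f+g) = (c f) ∘ ρ_{−g} + c g`), consider the one-form `α` on `S = G × V`
defined by `α(g,v)(ξ_g,(v,u)) = ⟨c g, u⟩`.  Its exterior derivative `dα`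
(computed on constant vector fields by
`dα x (X,Y) = D_x(α(·)Y)·X − D_x(α(·)X)·Y`) is invariant under right
translations by `S` (whose tangent map is `(δg, δu) ↦ (δg, ρ_g δu)`), and its
value at the identity is
`dα(e,0)((ξ,u),(η,w)) = ⟨dc ξ, w⟩ − ⟨dc η, u⟩` with `dc := T_e c`. -/
theorem stmt7 {G V : Type*} [NormedAddCommGroup G] [NormedSpace ℝ G]
    [NormedAddCommGroup V] [NormedSpace ℝ V]
    (ρ : G → V →L[ℝ] V)
    (hρ0 : ρ 0 = ContinuousLinearMap.id ℝ V)
    (hρadd : ∀ g h : G, ρ (g + h) = (ρ h).comp (ρ g))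
    (c : G → V →L[ℝ] ℝ)
    (hcdiff : Differentiable ℝ c)
    (hc : ∀ f g : G, c (f + g) = (c f).comp (ρ (-g)) + c g) :
    let α : G × V → G × V → ℝ := fun y δ => c y.1 δ.2
    let dα : G × V → G × V → G × V → ℝ := fun x X Y =>
      fderiv ℝ (fun y => α y Y) x X - fderiv ℝ (fun y => α y X) x Y
    -- right invariance of dα under translation by (g, v) ∈ S
    (∀ (g : G) (v : V) (x X Y : G × V),
        dα (x.1 + g, v + ρ g x.2) (X.1, ρ g X.2) (Y.1, ρ g Y.2) = dα x X Y) ∧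
    -- value at the identity (e,0) of S
    (∀ (ξ η : G) (u w : V),
        dα (0, 0) (ξ, u) (η, w) = fderiv ℝ c 0 ξ w - fderiv ℝ c 0 η u) := by

  intro α dα
  have hdu : ∀ u : V, Differentiable ℝ (fun f => c f u) := fun u =>
    hcdiff.clm_apply (differentiable_const u)
  have key : ∀ (x : G × V) (u : V) (X : G × V),
      fderiv ℝ (fun y : G × V => c y.1 u) x X = fderiv ℝ (fun f => c f u) x.1 X.1 := by
    intro x u X
    have h1 : HasFDerivAt (fun y : G × V => c y.1 u)
        ((fderiv ℝ (fun f => c f u) x.1).comp (ContinuousLinearMap.fst ℝ G V)) x :=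
      ((hdu u x.1).hasFDerivAt).comp x hasFDerivAt_fst
    rw [h1.fderiv]; rfl
  constructor
  · intro g v x X Y
    have hρ : ∀ u : V, ρ (-g) (ρ g u) = u := by
      intro u
      have h := hρadd g (-g)
      rw [add_neg_cancel, hρ0] at h
      have := congrArg (fun L : V →L[ℝ] V => L u) h
      simpa using this.symm
    have main : ∀ (u : V) (ξ : G),
        fderiv ℝ (fun f => c f (ρ g u)) (x.1 + g) ξ = fderiv ℝ (fun f => c f u) x.1 ξ := by
      intro u ξ
      have htrans : HasFDerivAt (fun f : G => c (f + g) (ρ g u))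
          (fderiv ℝ (fun f => c f (ρ g u)) (x.1 + g)) x.1 := by
        have := ((hdu (ρ g u) (x.1 + g)).hasFDerivAt).comp x.1
          ((hasFDerivAt_id x.1).add_const g)
        simpa [Function.comp_def] using this
      have heq : (fun f : G => c (f + g) (ρ g u)) = fun f => c f u + c g (ρ g u) := by
        funext f
        rw [hc f g]
        simp [hρ u]
      rw [heq] at htrans
      have h2 : HasFDerivAt (fun f : G => c f u + c g (ρ g u))
          (fderiv ℝ (fun f => c f u) x.1) x.1 :=
        ((hdu u x.1).hasFDerivAt).add_const _
      rw [htrans.unique h2]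
    simp only [dα, α, key]
    rw [main, main]
  · intro ξ η u w
    have hf : ∀ (u : V) (ξ : G), fderiv ℝ (fun f => c f u) 0 ξ = fderiv ℝ c 0 ξ u := by
      intro u ξ
      rw [fderiv_clm_apply (hcdiff 0) (differentiableAt_const u)]
      simp
    simp only [dα, α, key]
    rw [hf, hf]
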